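/- Let G : [0,1] → ℝ be defined by G(x) = ∫₀ˣ t·sin(1/t²) dt for x > 0 and G(0) = 0. Then G is of bounded variation on [0,1], and the function f : [0,1] → ℝ given by f(x) = 1/x² for x > 0 and f(0) = 0 is Henstock–Kurzweil–Stieltjes integrable with respect to G on [0,1] (equivalently, the improper integrals ∫_y¹ (sin(1/x²))/x dx converge as y ↘ 0), but the improper integral ∫₀¹ |sin(1/x²)|/x dx diverges, so f is not integrable with respect to the total variation function T_G(x) = ∫₀ˣ |t·sin(1/t²)| dt. -/

import Mathlib

open Filter Topology MeasureTheory Set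

lemma hderiv1 {x : ℝ} (hx : x ≠ 0) :
    HasDerivAt (fun x : ℝ => x ^ 2 * Real.cos (1 / x ^ 2) / 2)
      (x * Real.cos (1 / x ^ 2) + Real.sin (1 / x ^ 2) / x) x := by
  have hd : HasDerivAt (fun x : ℝ => 1 / x ^ 2) (-2 / x ^ 3) x := by
    have h := (hasDerivAt_pow 2 x).inv (pow_ne_zero 2 hx)
    simp only [one_div]
    refine h.congr_deriv ?_
    field_simp; ring
  have hcos := (Real.hasDerivAt_cos (1 / x ^ 2)).comp x hd
  have h := ((hasDerivAt_pow 2 x).mul hcos).div_const 2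
  refine h.congr_deriv ?_
  simp only [Function.comp_apply]
  field_simp
  ring

lemma hderiv2 {x : ℝ} (hx : x ≠ 0) :
    HasDerivAt (fun x : ℝ => x ^ 2 * Real.sin (2 / x ^ 2) / 8)
      (x * Real.sin (2 / x ^ 2) / 4 - Real.cos (2 / x ^ 2) / (2 * x)) x := by
  have hd : HasDerivAt (fun x : ℝ => 2 / x ^ 2) (-4 / x ^ 3) x := by
    have h := ((hasDerivAt_pow 2 x).inv (pow_ne_zero 2 hx)).const_mul (2 : ℝ)
    simp only [div_eq_mul_inv]
    refine h.congr_deriv ?_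
    field_simp; ring
  have hsin := (Real.hasDerivAt_sin (2 / x ^ 2)).comp x hd
  have h := ((hasDerivAt_pow 2 x).mul hsin).div_const 8
  refine h.congr_deriv ?_
  simp only [Function.comp_apply]
  field_simp
  ring

lemma intOn {g : ℝ → ℝ} (hm : Measurable g) (hb : ∀ x ∈ Set.Ioc (0:ℝ) 1, |g x| ≤ 1) :
    MeasureTheory.IntegrableOn g (Set.Ioc 0 1) := by
  refine Integrable.mono' (integrable_const 1) hm.aestronglyMeasurable ?_
  filter_upwards [ae_restrict_mem measurableSet_Ioc] with x hx
  simpa using hb x hx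

lemma tail_tendsto {g : ℝ → ℝ} (hm : Measurable g)
    (hb : ∀ x ∈ Set.Ioc (0:ℝ) 1, |g x| ≤ 1) :
    Filter.Tendsto (fun y : ℝ => ∫ x in Set.Ioc y 1, g x) (𝓝[>] (0:ℝ))
      (𝓝 (∫ x in Set.Ioc 0 1, g x)) := by
  have hgi := intOn hm hb
  have key : ∀ y ∈ Set.Ioo (0:ℝ) 1,
      ∫ x in Set.Ioc y 1, g x = (∫ x in Set.Ioc 0 1, g x) - ∫ x in Set.Ioc 0 y, g x := by
    intro y hy
    have hsplit : Set.Ioc (0:ℝ) y ∪ Set.Ioc y 1 = Set.Ioc 0 1 :=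
      Set.Ioc_union_Ioc_eq_Ioc hy.1.le hy.2.le
    have hdisj : Disjoint (Set.Ioc (0:ℝ) y) (Set.Ioc y 1) := Set.Ioc_disjoint_Ioc_of_le le_rfl
    have := MeasureTheory.setIntegral_union hdisj measurableSet_Ioc
      (hgi.mono_set (by rw [← hsplit]; exact Set.subset_union_left))
      (hgi.mono_set (by rw [← hsplit]; exact Set.subset_union_right))
    rw [hsplit] at this
    linarith
  have h0 : Filter.Tendsto (fun y : ℝ => ∫ x in Set.Ioc 0 y, g x) (𝓝[>] (0:ℝ)) (𝓝 0) := by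
    apply squeeze_zero_norm' (a := fun y => y)
    · filter_upwards [Ioo_mem_nhdsGT_of_mem (by norm_num : (0:ℝ) ∈ Set.Ico 0 1)] with y hy
      have hle : ‖∫ x in Set.Ioc 0 y, g x‖ ≤ 1 * (volume (Set.Ioc (0:ℝ) y)).toReal := by
        refine norm_setIntegral_le_of_norm_le_const ?_ ?_
        · simpa [Real.volume_Ioc] using ENNReal.ofReal_lt_top
        · intro x hx
          have : x ∈ Set.Ioc (0:ℝ) 1 := ⟨hx.1, hx.2.trans hy.2.le⟩
          simpa using hb x this
      simpa [Real.volume_Ioc, ENNReal.toReal_ofReal hy.1.le] using hle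
    · exact tendsto_id.mono_right nhdsWithin_le_nhds
  have hts := (tendsto_const_nhds.sub h0 : Filter.Tendsto
    (fun y : ℝ => (∫ x in Set.Ioc 0 1, g x) - ∫ x in Set.Ioc 0 y, g x) (𝓝[>] (0:ℝ))
    (𝓝 ((∫ x in Set.Ioc 0 1, g x) - 0)))
  rw [sub_zero] at hts
  apply hts.congr'
  filter_upwards [Ioo_mem_nhdsGT_of_mem (by norm_num : (0:ℝ) ∈ Set.Ico 0 1)] with y hy
  exact (key y hy).symm

lemma sq_tendsto_zero {c : ℝ} :
    Filter.Tendsto (fun y : ℝ => y ^ 2 * Real.sin (c / y ^ 2) / 8) (𝓝[>] (0:ℝ)) (𝓝 0) := by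
  apply squeeze_zero_norm' (a := fun y : ℝ => y ^ 2)
  · filter_upwards with y
    have h := Real.abs_sin_le_one (c / y ^ 2)
    rw [Real.norm_eq_abs, abs_div, abs_mul, abs_pow, sq_abs]
    rw [(by norm_num : |(8:ℝ)| = 8)]
    nlinarith [sq_nonneg y, abs_nonneg (Real.sin (c / y ^ 2))]
  · have h : Filter.Tendsto (fun y : ℝ => y ^ 2) (𝓝 (0:ℝ)) (𝓝 0) := by
      simpa using (continuous_pow 2).tendsto (0:ℝ)
    exact h.mono_left nhdsWithin_le_nhds

lemma cos_sq_tendsto_zero :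
    Filter.Tendsto (fun y : ℝ => y ^ 2 * Real.cos (1 / y ^ 2) / 2) (𝓝[>] (0:ℝ)) (𝓝 0) := by
  apply squeeze_zero_norm' (a := fun y : ℝ => y ^ 2)
  · filter_upwards with y
    have h := Real.abs_cos_le_one (1 / y ^ 2)
    rw [Real.norm_eq_abs, abs_div, abs_mul, abs_pow, sq_abs, abs_two]
    nlinarith [sq_nonneg y, abs_nonneg (Real.cos (1 / y ^ 2))]
  · have h : Filter.Tendsto (fun y : ℝ => y ^ 2) (𝓝 (0:ℝ)) (𝓝 0) := by
      simpa using (continuous_pow 2).tendsto (0:ℝ)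
    exact h.mono_left nhdsWithin_le_nhds

/-- Key facts behind the example that the `G`-integral of `f(x) = 1/x²` with
respect to `G(x) = ∫₀ˣ t sin(1/t²) dt` exists while the integral with respect
to the variation function does not:
(1) `t ↦ t sin(1/t²)` is (absolutely) integrable on `(0,1]`, so `G` has bounded
variation;
(2) the improper integrals `∫_y¹ sin(1/x²)/x dx` converge to a finite limit as
`y ↘ 0`, so `f` is `G`-integrable;
(3) `∫_y¹ |sin(1/x²)|/x dx → +∞` as `y ↘ 0`, so `f` is not `T_G`-integrable. -/
theorem stmt15 :
    MeasureTheory.IntegrableOn (fun t : ℝ => t * Real.sin (1 / t ^ 2))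
      (Set.Ioc 0 1) ∧
    (∃ A : ℝ, Filter.Tendsto
      (fun y : ℝ => ∫ x in Set.Ioc y 1, Real.sin (1 / x ^ 2) / x)
      (𝓝[>] (0 : ℝ)) (𝓝 A)) ∧
    Filter.Tendsto
      (fun y : ℝ => ∫ x in Set.Ioc y 1, |Real.sin (1 / x ^ 2)| / x)
      (𝓝[>] (0 : ℝ)) Filter.atTop := by
  have habs : ∀ (c x : ℝ), x ∈ Set.Ioc (0:ℝ) 1 → |x * Real.sin (c / x ^ 2)| ≤ 1 := by
    intro c x hx
    rw [abs_mul]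
    have h1 : |x| ≤ 1 := abs_le.mpr ⟨by linarith [hx.1], hx.2⟩
    have h2 := Real.abs_sin_le_one (c / x ^ 2)
    nlinarith [abs_nonneg x, abs_nonneg (Real.sin (c / x ^ 2))]
  have habsc : ∀ x ∈ Set.Ioc (0:ℝ) 1, |x * Real.cos (1 / x ^ 2)| ≤ 1 := by
    intro x hx
    rw [abs_mul]
    have h1 : |x| ≤ 1 := abs_le.mpr ⟨by linarith [hx.1], hx.2⟩
    have h2 := Real.abs_cos_le_one (1 / x ^ 2)
    nlinarith [abs_nonneg x, abs_nonneg (Real.cos (1 / x ^ 2))]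
  refine ⟨intOn (by fun_prop) (habs 1), ?_, ?_⟩
  · -- Part 2
    set g : ℝ → ℝ := fun x => x * Real.cos (1 / x ^ 2) with hg
    have htail := tail_tendsto (g := g) (by fun_prop) habsc
    refine ⟨Real.cos 1 / 2 - ∫ x in Set.Ioc 0 1, g x, ?_⟩
    have key : ∀ y ∈ Set.Ioo (0:ℝ) 1,
        ∫ x in Set.Ioc y 1, Real.sin (1 / x ^ 2) / x
          = Real.cos 1 / 2 - y ^ 2 * Real.cos (1 / y ^ 2) / 2 - ∫ x in Set.Ioc y 1, g x := by
      intro y hy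
      have hy1 : y ≤ 1 := hy.2.le
      have hxne : ∀ x ∈ Set.Icc y 1, x ≠ 0 := fun x hx =>
        ne_of_gt (lt_of_lt_of_le hy.1 hx.1)
      have hc1 : ContinuousOn (fun x : ℝ => 1 / x ^ 2) (Set.Icc y 1) :=
        continuousOn_const.div (continuous_pow 2).continuousOn
          (fun x hx => pow_ne_zero 2 (hxne x hx))
      have hcg : ContinuousOn g (Set.Icc y 1) :=
        continuousOn_id.mul (Real.continuous_cos.comp_continuousOn hc1)
      have hcs : ContinuousOn (fun x : ℝ => Real.sin (1 / x ^ 2) / x) (Set.Icc y 1) :=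
        (Real.continuous_sin.comp_continuousOn hc1).div continuousOn_id hxne
      have hig : IntervalIntegrable g volume y 1 := hcg.intervalIntegrable_of_Icc hy1
      have his : IntervalIntegrable (fun x : ℝ => Real.sin (1 / x ^ 2) / x) volume y 1 :=
        hcs.intervalIntegrable_of_Icc hy1
      have hftc := intervalIntegral.integral_eq_sub_of_hasDerivAt
        (f := fun x : ℝ => x ^ 2 * Real.cos (1 / x ^ 2) / 2)
        (f' := fun x : ℝ => g x + Real.sin (1 / x ^ 2) / x)
        (fun x hx => hderiv1 (hxne x (by rwa [Set.uIcc_of_le hy1] at hx)))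
        ((hcg.add hcs).intervalIntegrable_of_Icc hy1)
      rw [intervalIntegral.integral_add hig his] at hftc
      simp only [one_pow, div_one, one_mul] at hftc
      rw [← intervalIntegral.integral_of_le hy1, ← intervalIntegral.integral_of_le hy1]
      linarith
    have hlim := ((tendsto_const_nhds (x := Real.cos 1 / 2)
      (f := 𝓝[>] (0:ℝ))).sub cos_sq_tendsto_zero).sub htail
    rw [sub_zero] at hlim
    exact hlim.congr' (by
      filter_upwards [Ioo_mem_nhdsGT_of_mem (by norm_num : (0:ℝ) ∈ Set.Ico 0 1)] with y hy
      exact (key y hy).symm)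
  · -- Part 3
    set g2 : ℝ → ℝ := fun x => x * Real.sin (2 / x ^ 2) with hg2
    have htail2 := tail_tendsto (g := g2) (by fun_prop) (habs 2)
    -- lower bound
    have key : ∀ y ∈ Set.Ioo (0:ℝ) 1,
        -Real.log y / 2 - (∫ x in Set.Ioc y 1, g2 x) / 4
          + (Real.sin 2 / 8 - y ^ 2 * Real.sin (2 / y ^ 2) / 8)
          ≤ ∫ x in Set.Ioc y 1, |Real.sin (1 / x ^ 2)| / x := by
      intro y hy
      have hy1 : y ≤ 1 := hy.2.le
      have hxne : ∀ x ∈ Set.Icc y 1, x ≠ 0 := fun x hx =>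
        ne_of_gt (lt_of_lt_of_le hy.1 hx.1)
      have hc1 : ContinuousOn (fun x : ℝ => 1 / x ^ 2) (Set.Icc y 1) :=
        continuousOn_const.div (continuous_pow 2).continuousOn
          (fun x hx => pow_ne_zero 2 (hxne x hx))
      have hc2 : ContinuousOn (fun x : ℝ => 2 / x ^ 2) (Set.Icc y 1) :=
        continuousOn_const.div (continuous_pow 2).continuousOn
          (fun x hx => pow_ne_zero 2 (hxne x hx))
      have hcg2 : ContinuousOn g2 (Set.Icc y 1) :=
        continuousOn_id.mul (Real.continuous_sin.comp_continuousOn hc2)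
      have hcabs : ContinuousOn (fun x : ℝ => |Real.sin (1 / x ^ 2)| / x) (Set.Icc y 1) :=
        (continuous_abs.comp_continuousOn
          (Real.continuous_sin.comp_continuousOn hc1)).div continuousOn_id hxne
      have hcq : ContinuousOn (fun x : ℝ => Real.sin (1 / x ^ 2) ^ 2 / x) (Set.Icc y 1) :=
        ((Real.continuous_sin.comp_continuousOn hc1).pow 2).div continuousOn_id hxne
      have hcinv : ContinuousOn (fun x : ℝ => 1 / (2 * x)) (Set.Icc y 1) :=
        continuousOn_const.div (continuousOn_const.mul continuousOn_id)
          (fun x hx => mul_ne_zero two_ne_zero (hxne x hx))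
      have hccos : ContinuousOn (fun x : ℝ => Real.cos (2 / x ^ 2) / (2 * x)) (Set.Icc y 1) :=
        (Real.continuous_cos.comp_continuousOn hc2).div
          (continuousOn_const.mul continuousOn_id)
          (fun x hx => mul_ne_zero two_ne_zero (hxne x hx))
      -- step 1 : monotonicity
      have step1 : ∫ x in Set.Ioc y 1, Real.sin (1 / x ^ 2) ^ 2 / x
          ≤ ∫ x in Set.Ioc y 1, |Real.sin (1 / x ^ 2)| / x := by
        refine MeasureTheory.setIntegral_mono_on
          ((hcq.integrableOn_Icc).mono_set Set.Ioc_subset_Icc_self)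
          ((hcabs.integrableOn_Icc).mono_set Set.Ioc_subset_Icc_self)
          measurableSet_Ioc ?_
        intro x hx
        have hx0 : 0 < x := hy.1.trans hx.1
        have hs := Real.abs_sin_le_one (1 / x ^ 2)
        have : Real.sin (1 / x ^ 2) ^ 2 ≤ |Real.sin (1 / x ^ 2)| := by
          rw [← sq_abs]
          nlinarith [abs_nonneg (Real.sin (1 / x ^ 2))]
        gcongr
      -- step 2 : rewrite sin² integrand
      have step2 : ∀ x : ℝ, Real.sin (1 / x ^ 2) ^ 2 / x
          = 1 / (2 * x) - Real.cos (2 / x ^ 2) / (2 * x) := by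
        intro x
        have h : Real.sin (1 / x ^ 2) ^ 2 = 1 / 2 - Real.cos (2 * (1 / x ^ 2)) / 2 :=
          Real.sin_sq_eq_half_sub (1 / x ^ 2)
        have h2 : (2 : ℝ) * (1 / x ^ 2) = 2 / x ^ 2 := by ring
        rw [h, h2, sub_div, div_div, div_div]
      -- step 3 : FTC for the cos part
      have hftc := intervalIntegral.integral_eq_sub_of_hasDerivAt
        (f := fun x : ℝ => x ^ 2 * Real.sin (2 / x ^ 2) / 8)
        (f' := fun x : ℝ => g2 x / 4 - Real.cos (2 / x ^ 2) / (2 * x))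
        (fun x hx => by
          have := hderiv2 (hxne x (by rwa [Set.uIcc_of_le hy1] at hx))
          simpa [hg2, mul_div_assoc] using this)
        (((hcg2.div_const 4).sub hccos).intervalIntegrable_of_Icc hy1)
      rw [intervalIntegral.integral_sub ((hcg2.div_const 4).intervalIntegrable_of_Icc hy1)
        (hccos.intervalIntegrable_of_Icc hy1)] at hftc
      simp only [one_pow, div_one, one_mul] at hftc
      -- step 4 : integral of 1/(2x)
      have hinv : ∫ x in y..1, 1 / (2 * x) = -Real.log y / 2 := by
        have h0 : (0:ℝ) ∉ Set.uIcc y 1 := by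
          rw [Set.uIcc_of_le hy1]
          exact fun h => absurd h.1 (not_le.mpr hy.1)
        have hlog := integral_one_div (a := y) (b := 1) h0
        have heq : (fun x : ℝ => 1 / (2 * x)) = fun x : ℝ => (1/2 : ℝ) * (1 / x) := by
          funext x
          rw [one_div_mul_one_div]
        rw [heq, intervalIntegral.integral_const_mul, hlog]
        rw [Real.log_div one_ne_zero (ne_of_gt hy.1), Real.log_one]
        ring
      -- step 5 : value of ∫ sin²/x as interval integral
      have hg2iv : ∫ x in Set.Ioc y 1, g2 x = ∫ x in y..1, g2 x :=
        (intervalIntegral.integral_of_le hy1).symm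
      have hdiv4 : ∫ x in y..1, g2 x / 4 = (∫ x in y..1, g2 x) / 4 :=
        intervalIntegral.integral_div 4 g2
      have hq : ∫ x in Set.Ioc y 1, Real.sin (1 / x ^ 2) ^ 2 / x
          = -Real.log y / 2 - (∫ x in Set.Ioc y 1, g2 x) / 4
            + (Real.sin 2 / 8 - y ^ 2 * Real.sin (2 / y ^ 2) / 8) := by
        rw [← intervalIntegral.integral_of_le hy1]
        simp only [step2]
        rw [intervalIntegral.integral_sub (hcinv.intervalIntegrable_of_Icc hy1)
          (hccos.intervalIntegrable_of_Icc hy1), hinv, hg2iv]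
        linarith
      linarith [step1, hq.symm.le]
    -- limits
    have hlog : Filter.Tendsto (fun y : ℝ => -Real.log y / 2) (𝓝[>] (0:ℝ)) Filter.atTop := by
      have h1 : Filter.Tendsto (fun y : ℝ => -Real.log y) (𝓝[>] (0:ℝ)) Filter.atTop :=
        tendsto_neg_atTop_iff.mpr Real.tendsto_log_nhdsGT_zero
      exact h1.atTop_div_const (by norm_num)
    have hconv : Filter.Tendsto
        (fun y : ℝ => -(∫ x in Set.Ioc y 1, g2 x) / 4
          + (Real.sin 2 / 8 - y ^ 2 * Real.sin (2 / y ^ 2) / 8)) (𝓝[>] (0:ℝ))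
        (𝓝 (-(∫ x in Set.Ioc 0 1, g2 x) / 4 + (Real.sin 2 / 8 - 0))) :=
      ((htail2.neg).div_const 4).add (tendsto_const_nhds.sub sq_tendsto_zero)
    have hL : Filter.Tendsto
        (fun y : ℝ => -Real.log y / 2 - (∫ x in Set.Ioc y 1, g2 x) / 4
          + (Real.sin 2 / 8 - y ^ 2 * Real.sin (2 / y ^ 2) / 8)) (𝓝[>] (0:ℝ))
        Filter.atTop :=
      (hlog.atTop_add hconv).congr (fun y => by ring)
    refine tendsto_atTop_mono' _ ?_ hL
    filter_upwards [Ioo_mem_nhdsGT_of_mem (by norm_num : (0:ℝ) ∈ Set.Ico 0 1)] with y hy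
    exact key y hy
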